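/- For all real numbers a, b with 0 ≤ a ≤ b and all p ≥ 1, one has b^p - a^p ≤ p * ((a^p + b^p)/2)^((p-1)/p) * (b - a). -/

import Mathlib

open Real Set

/-- Bernoulli's inequality for nonpositive exponents. -/
lemma bernoulli_nonpos {s q : ℝ} (hs : 0 ≤ s) (hq : q ≤ 1) :
    1 + (q - 1) * s ≤ (1 + s) ^ (q - 1) := by
  have h1s : (0:ℝ) < 1 + s := by linarith
  rw [Real.rpow_def_of_pos h1s]
  have hlog : Real.log (1 + s) ≤ s := by
    have := Real.log_le_sub_one_of_pos h1s
    linarith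
  have h1 : (q - 1) * s ≤ (q - 1) * Real.log (1 + s) :=
    mul_le_mul_of_nonpos_left hlog (by linarith)
  have h2 := Real.add_one_le_exp (Real.log (1 + s) * (q - 1))
  nlinarith [h2, h1]

/-- The tangent line inequality for the convex function `t ↦ t ^ (q-1)`, `q ≤ 1`. -/
lemma tangent_rpow {μ y q : ℝ} (hμ : 0 < μ) (hy : μ ≤ y) (hq : q ≤ 1) :
    μ ^ (q - 1) + (q - 1) * μ ^ (q - 2) * (y - μ) ≤ y ^ (q - 1) := by
  set s : ℝ := (y - μ) / μ with hs
  have hs0 : 0 ≤ s := div_nonneg (by linarith) hμ.le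
  have hy' : y = μ * (1 + s) := by rw [hs]; field_simp <;> ring
  have hb := bernoulli_nonpos hs0 hq
  have h1 : y ^ (q - 1) = μ ^ (q - 1) * (1 + s) ^ (q - 1) := by
    rw [hy', Real.mul_rpow hμ.le (by linarith)]
  have h2 : μ ^ (q - 1) * (1 + (q - 1) * s) ≤ μ ^ (q - 1) * (1 + s) ^ (q - 1) :=
    mul_le_mul_of_nonneg_left hb (Real.rpow_nonneg hμ.le _)
  have h3 : μ ^ (q - 1) * (1 + (q - 1) * s) =
      μ ^ (q - 1) + (q - 1) * μ ^ (q - 2) * (y - μ) := by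
    have hμ2 : μ ^ (q - 1) = μ ^ (q - 2) * μ := by
      rw [← Real.rpow_add_one hμ.ne']; ring_nf
    have hss : μ ^ (q - 1) * s = μ ^ (q - 2) * (y - μ) := by
      rw [hμ2, hs]; field_simp
    linear_combination (q - 1) * hss
  rw [h1]
  linarith

/-- Key lemma: `q * ((x+y)/2)^(q-1) * (y-x) ≤ y^q - x^q` for `0 ≤ x ≤ y`, `0 < q ≤ 1`. -/
lemma key_lemma {x y q : ℝ} (hx : 0 ≤ x) (hxy : x ≤ y) (hq0 : 0 < q) (hq1 : q ≤ 1) :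
    q * ((x + y) / 2) ^ (q - 1) * (y - x) ≤ y ^ q - x ^ q := by
  rcases hx.lt_or_eq with hx0 | hx0
  · -- case 0 < x : monotonicity argument
    set F : ℝ → ℝ := fun z => z ^ q - x ^ q - q * ((x + z) / 2) ^ (q - 1) * (z - x) with hF
    have hder : ∀ z ∈ Ioi x, HasDerivAt F
        (q * z ^ (q - 1) - ((q * (2⁻¹ * (q - 1) * ((x + z) / 2) ^ (q - 1 - 1))) * (z - x)
          + (q * ((x + z) / 2) ^ (q - 1)) * 1)) z := by
      intro z hz
      rw [mem_Ioi] at hz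
      have hz0 : 0 < z := lt_of_le_of_lt hx0.le hz
      have hμ0 : (0:ℝ) < (x + z) / 2 := by linarith
      have d1 : HasDerivAt (fun y : ℝ => y ^ q) (q * z ^ (q - 1)) z :=
        Real.hasDerivAt_rpow_const (Or.inl hz0.ne')
      have dmid : HasDerivAt (fun y : ℝ => (x + y) / 2) (2⁻¹) z := by
        simpa using ((hasDerivAt_id z).const_add x).div_const 2
      have d2 : HasDerivAt (fun y : ℝ => ((x + y) / 2) ^ (q - 1))
          (2⁻¹ * (q - 1) * ((x + z) / 2) ^ (q - 1 - 1)) z :=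
        dmid.rpow_const (Or.inl hμ0.ne')
      have d3 : HasDerivAt (fun y : ℝ => q * ((x + y) / 2) ^ (q - 1) * (y - x))
          ((q * (2⁻¹ * (q - 1) * ((x + z) / 2) ^ (q - 1 - 1))) * (z - x)
            + (q * ((x + z) / 2) ^ (q - 1)) * 1) z :=
        (d2.const_mul q).mul ((hasDerivAt_id z).sub_const x)
      exact (d1.sub_const (x ^ q)).sub d3
    have hdnonneg : ∀ z ∈ Ioi x, 0 ≤ q * z ^ (q - 1) -
        ((q * (2⁻¹ * (q - 1) * ((x + z) / 2) ^ (q - 1 - 1))) * (z - x)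
          + (q * ((x + z) / 2) ^ (q - 1)) * 1) := by
      intro z hz
      rw [mem_Ioi] at hz
      have hμ0 : (0:ℝ) < (x + z) / 2 := by linarith
      have hμz : (x + z) / 2 ≤ z := by linarith
      have ht := tangent_rpow hμ0 hμz hq1
      set μ := (x + z) / 2
      have hzμ : z - x = 2 * (z - μ) := by simp only [μ]; ring
      have h1 : μ ^ (q - 1) + (q - 1) * μ ^ (q - 2) * (z - μ) ≤ z ^ (q - 1) := ht
      have hq1' : q - 1 - 1 = q - 2 := by ring
      rw [hq1', hzμ]
      nlinarith [h1, hq0.le]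
    have hmono : MonotoneOn F (Ici x) := by
      apply monotoneOn_of_deriv_nonneg (convex_Ici x)
      · -- continuity on Ici x
        have hc1 : ContinuousOn (fun z : ℝ => z ^ q) (Ici x) :=
          ContinuousOn.rpow_const continuousOn_id (fun z _ => Or.inr hq0.le)
        have hc2 : ContinuousOn (fun z : ℝ => ((x + z) / 2) ^ (q - 1)) (Ici x) := by
          apply ContinuousOn.rpow_const
          · exact (continuousOn_const.add continuousOn_id).div_const 2
          · intro z hz
            rw [mem_Ici] at hz
            have : (0:ℝ) < (x + z) / 2 := by linarith
            exact Or.inl this.ne'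
        exact (hc1.sub continuousOn_const).sub
          ((continuousOn_const.mul hc2).mul ((continuousOn_id.sub continuousOn_const)))
      · intro z hz
        rw [interior_Ici] at hz
        exact ((hder z hz).differentiableAt).differentiableWithinAt
      · intro z hz
        rw [interior_Ici] at hz
        rw [(hder z hz).deriv]
        exact hdnonneg z hz
    have hFx : F x = 0 := by simp [hF]
    have := hmono (self_mem_Ici) (mem_Ici.mpr hxy) hxy
    rw [hFx] at this
    simp only [hF] at this
    linarith
  · -- case x = 0
    subst hx0
    simp only [zero_add, sub_zero]
    rcases hxy.lt_or_eq with hy0 | hy0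
    · have h2 : ((y : ℝ) / 2) ^ (q - 1) = y ^ (q - 1) * (2:ℝ) ^ (1 - q) := by
        rw [Real.div_rpow hy0.le (by norm_num), div_eq_mul_inv,
          ← Real.rpow_neg (by norm_num : (0:ℝ) ≤ 2), neg_sub]
      have hyq : y ^ (q - 1) * y = y ^ q := by
        rw [← Real.rpow_add_one hy0.ne']; ring_nf
      -- need q * 2^(1-q) ≤ 1
      have hkey : q * (2:ℝ) ^ (1 - q) ≤ 1 := by
        have h21 : (2:ℝ) ^ (q - 1) = Real.exp ((q - 1) * Real.log 2) := by
          rw [Real.rpow_def_of_pos (by norm_num)]; ring_nf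
        have hlog2 : Real.log 2 ≤ 1 := by
          have := Real.log_le_sub_one_of_pos (by norm_num : (0:ℝ) < 2); linarith
        have hexp := Real.add_one_le_exp ((q - 1) * Real.log 2)
        have hmul : (q - 1) * 1 ≤ (q - 1) * Real.log 2 :=
          mul_le_mul_of_nonpos_left hlog2 (by linarith)
        have hq2 : q ≤ (2:ℝ) ^ (q - 1) := by rw [h21]; nlinarith
        have h2pos : (0:ℝ) < (2:ℝ) ^ (1 - q) := Real.rpow_pos_of_pos (by norm_num) _
        have hprod : (2:ℝ) ^ (q - 1) * (2:ℝ) ^ (1 - q) = 1 := by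
          rw [← Real.rpow_add (by norm_num : (0:ℝ) < 2)]; norm_num
        calc q * (2:ℝ) ^ (1 - q) ≤ (2:ℝ) ^ (q - 1) * (2:ℝ) ^ (1 - q) :=
              mul_le_mul_of_nonneg_right hq2 h2pos.le
          _ = 1 := hprod
      have hyq0 : 0 ≤ y ^ q := Real.rpow_nonneg hy0.le q
      calc q * (y / 2) ^ (q - 1) * y = (q * (2:ℝ) ^ (1 - q)) * (y ^ (q - 1) * y) := by
            rw [h2]; ring
        _ = (q * (2:ℝ) ^ (1 - q)) * y ^ q := by rw [hyq]
        _ ≤ 1 * y ^ q := mul_le_mul_of_nonneg_right hkey hyq0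
        _ = y ^ q - 0 ^ q := by
            rw [Real.zero_rpow hq0.ne']; ring
    · subst hy0
      simp [Real.zero_rpow hq0.ne']

/-- Amghibech's chain-rule substitute: the underlying real-variable inequality. -/
theorem amghibech_chain_rule (a b p : ℝ) (ha : 0 ≤ a) (hab : a ≤ b) (hp : 1 ≤ p) :
    b ^ p - a ^ p ≤ p * ((a ^ p + b ^ p) / 2) ^ ((p - 1) / p) * (b - a) := by
  have hp0 : 0 < p := lt_of_lt_of_le one_pos hp
  rcases (ha.trans hab).lt_or_eq with hb0 | hb0
  · -- 0 < b
    set x := a ^ p with hxdef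
    set y := b ^ p with hydef
    have hx : 0 ≤ x := Real.rpow_nonneg ha p
    have hy0 : 0 < y := Real.rpow_pos_of_pos hb0 p
    have hxy : x ≤ y := Real.rpow_le_rpow ha hab hp0.le
    have hq0 : 0 < 1 / p := by positivity
    have hq1 : 1 / p ≤ 1 := by
      rw [div_le_one hp0]; exact hp
    have hkey := key_lemma hx hxy hq0 hq1
    have hxa : x ^ (1 / p) = a := by
      rw [hxdef, one_div, Real.rpow_rpow_inv ha hp0.ne']
    have hyb : y ^ (1 / p) = b := by
      rw [hydef, one_div, Real.rpow_rpow_inv (ha.trans hab) hp0.ne']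
    rw [hxa, hyb] at hkey
    set μ := (x + y) / 2 with hμdef
    have hμ0 : 0 < μ := by
      have : 0 ≤ x := hx
      simp only [hμdef]; linarith
    have hμp : (0:ℝ) ≤ p * μ ^ ((p - 1) / p) := by positivity
    have hmul := mul_le_mul_of_nonneg_left hkey hμp
    have hexp : μ ^ ((p - 1) / p) * μ ^ (1 / p - 1) = 1 := by
      rw [← Real.rpow_add hμ0]
      have : (p - 1) / p + (1 / p - 1) = 0 := by field_simp; ring
      rw [this, Real.rpow_zero]
    calc b ^ p - a ^ p = y - x := rfl
      _ = (p * μ ^ ((p - 1) / p)) * ((1 / p) * μ ^ (1 / p - 1) * (y - x)) := by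
          have hpp : p * (1 / p) = 1 := by field_simp
          have hre : (p * μ ^ ((p - 1) / p)) * ((1 / p) * μ ^ (1 / p - 1) * (y - x))
              = (p * (1 / p)) * ((μ ^ ((p - 1) / p) * μ ^ (1 / p - 1)) * (y - x)) := by ring
          rw [hre, hexp, hpp]; ring
      _ ≤ (p * μ ^ ((p - 1) / p)) * (b - a) := hmul
      _ = p * μ ^ ((p - 1) / p) * (b - a) := rfl
  · -- b = 0, hence a = 0
    have ha0 : a = 0 := le_antisymm (hab.trans hb0.symm.le) ha
    subst ha0
    rw [← hb0]
    simp
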